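/- For every ρ ∈ (0,1) there exists a constant C > 0 (depending only on ρ) such that: for every A > 0, every function u : ℤ³ → ℂ with u(0) = 0 and |u(α)| ≤ A/|α|^{2+ρ} for all α ≠ 0, and every k ∈ ℤ³ with k ≠ 0, one has Σ_{α ∈ ℤ³, 0 < |α| ≤ 2|k|} |α|·|u(α)|·|u(k−α)| + |k|·Σ_{α ∈ ℤ³, |α| > 2|k|} |u(α)|·|u(k−α)| ≤ C·A²/|k|^{2ρ}. -/

import Mathlib

noncomputable def znorm (a : Fin 3 → ℤ) : ℝ := Real.sqrt (∑ i, ((a i : ℝ)) ^ 2)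

lemma znorm_nonneg (a : Fin 3 → ℤ) : 0 ≤ znorm a := Real.sqrt_nonneg _

lemma znorm_eq_norm (a : Fin 3 → ℤ) :
    znorm a = ‖((WithLp.equiv 2 (Fin 3 → ℝ)).symm (fun i => (a i : ℝ)) : EuclideanSpace ℝ (Fin 3))‖ := by
  rw [EuclideanSpace.norm_eq]
  simp [znorm, Real.norm_eq_abs, sq_abs]

lemma znorm_sub_le (a b : Fin 3 → ℤ) : znorm (a - b) ≤ znorm a + znorm b := by
  rw [znorm_eq_norm, znorm_eq_norm, znorm_eq_norm]
  have h : ((WithLp.equiv 2 (Fin 3 → ℝ)).symm (fun i => ((a - b) i : ℝ)) : EuclideanSpace ℝ (Fin 3))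
      = (WithLp.equiv 2 (Fin 3 → ℝ)).symm (fun i => (a i : ℝ))
        - (WithLp.equiv 2 (Fin 3 → ℝ)).symm (fun i => (b i : ℝ)) := by
    ext i
    simp
  rw [h]
  exact norm_sub_le _ _

lemma znorm_sub_znorm_le (a b : Fin 3 → ℤ) : znorm a - znorm b ≤ znorm (a - b) := by
  rw [znorm_eq_norm, znorm_eq_norm, znorm_eq_norm]
  have h : ((WithLp.equiv 2 (Fin 3 → ℝ)).symm (fun i => ((a - b) i : ℝ)) : EuclideanSpace ℝ (Fin 3))
      = (WithLp.equiv 2 (Fin 3 → ℝ)).symm (fun i => (a i : ℝ))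
        - (WithLp.equiv 2 (Fin 3 → ℝ)).symm (fun i => (b i : ℝ)) := by
    ext i
    simp
  rw [h]
  exact norm_sub_norm_le _ _

lemma znorm_sub_comm (a b : Fin 3 → ℤ) : znorm (a - b) = znorm (b - a) := by
  unfold znorm
  congr 1
  apply Finset.sum_congr rfl
  intro i _
  simp only [Pi.sub_apply]
  push_cast
  ring

lemma znorm_zero : znorm 0 = 0 := by simp [znorm]

lemma one_le_znorm {a : Fin 3 → ℤ} (ha : a ≠ 0) : 1 ≤ znorm a := by
  obtain ⟨i, hi⟩ : ∃ i, a i ≠ 0 := by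
    by_contra h
    push_neg at h
    exact ha (funext h)
  have h1 : (1 : ℝ) ≤ (a i : ℝ) ^ 2 := by
    have : (1 : ℤ) ≤ (a i) ^ 2 := by
      rcases lt_or_gt_of_ne hi with h | h <;> nlinarith
    exact_mod_cast this
  have h2 : (1 : ℝ) ≤ ∑ j, ((a j : ℝ)) ^ 2 := by
    refine h1.trans ?_
    exact Finset.single_le_sum (f := fun j => ((a j : ℝ))^2) (fun j _ => sq_nonneg _) (Finset.mem_univ i)
  calc (1:ℝ) = Real.sqrt 1 := by simp
  _ ≤ znorm a := Real.sqrt_le_sqrt h2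

lemma znorm_pos {a : Fin 3 → ℤ} (ha : a ≠ 0) : 0 < znorm a :=
  lt_of_lt_of_le one_pos (one_le_znorm ha)

lemma znorm_pos_iff {a : Fin 3 → ℤ} : 0 < znorm a ↔ a ≠ 0 := by
  constructor
  · intro h ha
    subst ha
    simp [znorm_zero] at h
  · exact znorm_pos
def supn (a : Fin 3 → ℤ) : ℕ := Finset.univ.sup fun i => (a i).natAbs

lemma supn_le_iff {a : Fin 3 → ℤ} {m : ℕ} : supn a ≤ m ↔ ∀ i, (a i).natAbs ≤ m := by
  simp [supn, Finset.sup_le_iff]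

lemma supn_le_znorm (a : Fin 3 → ℤ) : (supn a : ℝ) ≤ znorm a := by
  obtain ⟨i, _, hi⟩ := Finset.exists_mem_eq_sup Finset.univ Finset.univ_nonempty
    (fun i => (a i).natAbs)
  rw [supn, hi]
  have h1 : ((a i).natAbs : ℝ) = |(a i : ℝ)| := by
    rw [Nat.cast_natAbs]
    push_cast
    rfl
  rw [h1]
  have h2 : |(a i : ℝ)| = Real.sqrt ((a i : ℝ)^2) := (Real.sqrt_sq_eq_abs _).symm
  rw [h2]
  apply Real.sqrt_le_sqrt
  exact Finset.single_le_sum (f := fun j => ((a j : ℝ))^2) (fun j _ => sq_nonneg _)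
    (Finset.mem_univ i)

lemma znorm_le_supn (a : Fin 3 → ℤ) : znorm a ≤ Real.sqrt 3 * (supn a : ℝ) := by
  have h1 : ∀ i, ((a i : ℝ))^2 ≤ ((supn a : ℝ))^2 := by
    intro i
    have : (a i).natAbs ≤ supn a :=
      Finset.le_sup (f := fun j => (a j).natAbs) (Finset.mem_univ i)
    have h2 : |(a i : ℝ)| ≤ (supn a : ℝ) := by
      rw [← Int.cast_abs]
      rw [Int.abs_eq_natAbs]
      exact_mod_cast this
    calc ((a i : ℝ))^2 = |(a i:ℝ)|^2 := (sq_abs _).symm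
    _ ≤ ((supn a : ℝ))^2 := by
        apply pow_le_pow_left₀ (abs_nonneg _) h2
  have h3 : ∑ i, ((a i : ℝ))^2 ≤ 3 * ((supn a : ℝ))^2 := by
    calc ∑ i, ((a i : ℝ))^2 ≤ ∑ _i : Fin 3, ((supn a : ℝ))^2 := Finset.sum_le_sum fun i _ => h1 i
    _ = 3 * ((supn a : ℝ))^2 := by
        rw [Finset.sum_const, Finset.card_univ, Fintype.card_fin, nsmul_eq_mul]
        norm_num
  calc znorm a ≤ Real.sqrt (3 * ((supn a : ℝ))^2) := Real.sqrt_le_sqrt h3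
  _ = Real.sqrt 3 * (supn a : ℝ) := by
      rw [Real.sqrt_mul (by norm_num)]
      rw [Real.sqrt_sq (Nat.cast_nonneg _)]

noncomputable def zbox (m : ℕ) : Finset (Fin 3 → ℤ) := Fintype.piFinset fun _ => Finset.Icc (-(m:ℤ)) (m:ℤ)

lemma mem_zbox {m : ℕ} {a : Fin 3 → ℤ} : a ∈ zbox m ↔ supn a ≤ m := by
  simp only [zbox, Fintype.mem_piFinset, Finset.mem_Icc, supn, Finset.sup_le_iff,
    Finset.mem_univ, true_implies]
  exact forall_congr' fun i => by omega

lemma card_zbox (m : ℕ) : (zbox m).card = (2*m+1)^3 := by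
  rw [zbox, Fintype.card_piFinset]
  have : (Finset.Icc (-(m:ℤ)) (m:ℤ)).card = 2*m+1 := by
    rw [Int.card_Icc]
    omega
  simp [this]

lemma card_shell_le (F : Finset (Fin 3 → ℤ)) (m : ℕ) :
    (F.filter (fun α => supn α = m)).card ≤ 26 * m^2 + 1 := by
  rcases Nat.eq_zero_or_pos m with rfl | hm
  · have hsub : F.filter (fun α => supn α = 0) ⊆ zbox 0 := by
      intro α hα
      rw [mem_zbox]
      simp only [Finset.mem_filter] at hα
      omega
    calc _ ≤ (zbox 0).card := Finset.card_le_card hsub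
    _ = 1 := by rw [card_zbox]; norm_num
    _ ≤ _ := by norm_num
  · have hsub : F.filter (fun α => supn α = m) ⊆ zbox m \ zbox (m-1) := by
      intro α hα
      simp only [Finset.mem_filter] at hα
      rw [Finset.mem_sdiff, mem_zbox, mem_zbox]
      omega
    have hsub2 : zbox (m-1) ⊆ zbox m := by
      intro α hα
      rw [mem_zbox] at hα ⊢
      omega
    calc _ ≤ (zbox m \ zbox (m-1)).card := Finset.card_le_card hsub
    _ = (zbox m).card - (zbox (m-1)).card := Finset.card_sdiff_of_subset hsub2
    _ ≤ 26 * m^2 + 1 := by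
        rw [card_zbox, card_zbox]
        obtain ⟨n, rfl⟩ : ∃ n, m = n + 1 := ⟨m - 1, by omega⟩
        simp only [Nat.add_sub_cancel]
        have h1 : (2*(n+1)+1)^3 = (2*n+1)^3 + (24*n^2+48*n+26) := by ring
        have h2 : 26*(n+1)^2+1 = 26*n^2+52*n+27 := by ring
        omega

lemma sum_shell (F : Finset (Fin 3 → ℤ)) (w : ℕ → ℝ) (hw : ∀ m, 0 ≤ w m)
    (G : Finset ℕ) (hF : ∀ α ∈ F, supn α ∈ G) :
    ∑ α ∈ F, w (supn α) ≤ ∑ m ∈ G, ((26 * m^2 + 1 : ℕ) : ℝ) * w m := by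
  rw [← Finset.sum_fiberwise_of_maps_to hF]
  apply Finset.sum_le_sum
  intro m _
  have h1 : ∑ α ∈ F.filter (fun α => supn α = m), w (supn α)
      = ((F.filter (fun α => supn α = m)).card : ℝ) * w m := by
    rw [Finset.sum_congr rfl (fun α hα => by
      simp only [Finset.mem_filter] at hα
      rw [hα.2])]
    rw [Finset.sum_const, nsmul_eq_mul]
  rw [h1]
  apply mul_le_mul_of_nonneg_right _ (hw m)
  exact_mod_cast card_shell_le F m
lemma key1 {t : ℝ} (ht0 : 0 < t) (ht1 : t ≤ 1) {x : ℝ} (hx : 1 ≤ x) :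
    t * x^(t-1) ≤ x^t - (x-1)^t := by
  have hx0 : 0 < x := lt_of_lt_of_le one_pos hx
  have h1 : (x - 1)^t = x^t * (1 - 1/x)^t := by
    rw [← Real.mul_rpow (le_of_lt hx0) (by
      rw [sub_nonneg]
      exact div_le_one_of_le₀ hx (le_of_lt hx0))]
    congr 1
    field_simp
  have h2 : (1 - 1/x)^t ≤ 1 + t * (-(1/x)) := by
    have := rpow_one_add_le_one_add_mul_self (s := -(1/x))
      (by
        have : 1/x ≤ 1 := div_le_one_of_le₀ hx (le_of_lt hx0)
        linarith) (le_of_lt ht0) ht1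
    convert this using 2; ring
  have h3 : (x-1)^t ≤ x^t * (1 - t/x) := by
    rw [h1]
    apply mul_le_mul_of_nonneg_left _ (Real.rpow_nonneg (le_of_lt hx0) t)
    calc (1 - 1/x)^t ≤ 1 + t * (-(1/x)) := h2
    _ = 1 - t/x := by ring
  have h4 : x^t * (t/x) = t * x^(t-1) := by
    rw [Real.rpow_sub hx0, Real.rpow_one]
    field_simp
  nlinarith [h3, h4]

lemma key2 {t : ℝ} (ht : 1 ≤ t) {x : ℝ} (hx : 2 ≤ x) :
    t * x^(-(t+1)) ≤ (x-1)^(-t) - x^(-t) := by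
  have hx0 : 0 < x := by linarith
  have hx1 : 0 < x - 1 := by linarith
  have h1 : (1 + 1/(x-1))^t ≥ 1 + t * (1/(x-1)) :=
    one_add_mul_self_le_rpow_one_add
      (by have h : (0:ℝ) < 1/(x-1) := by positivity
          linarith) ht
  have h2 : 1 + t * (1/(x-1)) ≥ 1 + t/x := by
    have : t/x ≤ t/(x-1) := by
      apply div_le_div_of_nonneg_left (by linarith) hx1 (by linarith)
    rw [ge_iff_le, add_le_add_iff_left]
    calc t/x ≤ t/(x-1) := this
    _ = t * (1/(x-1)) := by ring
  have h3 : (1 + 1/(x-1)) = x/(x-1) := by field_simp; ring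
  have h4 : (x/(x-1))^t ≥ 1 + t/x := by
    rw [← h3]; exact le_trans h2 h1
  have h5 : (x/(x-1))^t * x^(-t) = (x-1)^(-t) := by
    rw [Real.div_rpow (le_of_lt hx0) (le_of_lt hx1), Real.rpow_neg (le_of_lt hx0),
      Real.rpow_neg (le_of_lt hx1)]
    field_simp
  have h6 : (1 + t/x) * x^(-t) ≤ (x-1)^(-t) := by
    rw [← h5]
    apply mul_le_mul_of_nonneg_right h4 (Real.rpow_nonneg (le_of_lt hx0) _)
  have h7 : (t/x) * x^(-t) = t * x^(-(t+1)) := by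
    rw [show -(t+1) = -t - 1 by ring, Real.rpow_sub hx0, Real.rpow_one]
    field_simp
  nlinarith [h6, h7]

lemma ball_sum_1d {p : ℝ} (hp0 : -1 < p) (hp1 : p ≤ 1) (M : ℕ) :
    ∑ m ∈ Finset.Icc 1 M, (m:ℝ)^p ≤ (1/(p+1) + 1) * (M:ℝ)^(p+1) := by
  have hp1' : 0 < p + 1 := by linarith
  rcases le_or_gt 0 p with hp | hp
  · -- p ∈ [0,1]: each term ≤ M^p
    rcases Nat.eq_zero_or_pos M with rfl | hM
    · simp
      positivity
    have h1 : ∑ m ∈ Finset.Icc 1 M, (m:ℝ)^p ≤ ∑ _m ∈ Finset.Icc 1 M, (M:ℝ)^p := by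
      apply Finset.sum_le_sum
      intro m hm
      simp only [Finset.mem_Icc] at hm
      exact Real.rpow_le_rpow (Nat.cast_nonneg _) (by exact_mod_cast hm.2) hp
    have h2 : ∑ _m ∈ Finset.Icc 1 M, (M:ℝ)^p = (M:ℝ) * (M:ℝ)^p := by
      rw [Finset.sum_const, Nat.card_Icc, nsmul_eq_mul]
      simp
    have h3 : (M:ℝ) * (M:ℝ)^p = (M:ℝ)^(p+1) := by
      nth_rewrite 1 [← Real.rpow_one (M:ℝ)]
      rw [← Real.rpow_add (by exact_mod_cast hM)]
      ring_nf
    have h4 : (M:ℝ)^(p+1) ≤ (1/(p+1)+1) * (M:ℝ)^(p+1) := by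
      nth_rewrite 1 [← one_mul ((M:ℝ)^(p+1))]
      apply mul_le_mul_of_nonneg_right _ (Real.rpow_nonneg (Nat.cast_nonneg _) _)
      have : 0 < 1/(p+1) := by positivity
      linarith
    calc _ ≤ _ := h1
    _ = _ := h2
    _ = _ := h3
    _ ≤ _ := h4
  · -- p ∈ (-1,0): telescoping
    have key : ∑ m ∈ Finset.Icc 1 M, (m:ℝ)^p ≤ (M:ℝ)^(p+1) / (p+1) := by
      induction M with
      | zero => simp; positivity
      | succ N ih =>
        rw [Finset.sum_Icc_succ_top (by omega)]
        have hk := key1 (t := p+1) hp1' (by linarith) (x := (N:ℝ)+1) (by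
          have : (0:ℝ) ≤ (N:ℝ) := Nat.cast_nonneg _
          linarith)
        have hc : ((N:ℝ)+1) - 1 = (N:ℝ) := by ring
        rw [hc] at hk
        have he : (p+1) - 1 = p := by ring
        rw [he] at hk
        have hcast : ((N+1 : ℕ) : ℝ) = (N:ℝ) + 1 := by push_cast; ring
        rw [hcast]
        have : ((N:ℝ)+1)^p ≤ (((N:ℝ)+1)^(p+1) - (N:ℝ)^(p+1)) / (p+1) := by
          rw [le_div_iff₀ hp1']
          nlinarith [hk]
        rw [sub_div] at this
        linarith [ih, this]
    refine key.trans ?_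
    rw [div_eq_mul_one_div, mul_comm]
    apply mul_le_mul_of_nonneg_right _ (Real.rpow_nonneg (Nat.cast_nonneg _) _)
    linarith

lemma tail_sum_1d {t : ℝ} (ht : 1 ≤ t) (M : ℕ) (hM : 1 ≤ M) (N : ℕ) :
    ∑ m ∈ Finset.Ioc M N, (m:ℝ)^(-(t+1)) ≤ (M:ℝ)^(-t)/t := by
  have ht0 : 0 < t := by linarith
  have hM0 : (0:ℝ) < M := by exact_mod_cast hM
  rcases le_or_gt N M with h | h
  · rw [Finset.Ioc_eq_empty (by omega)]
    simp
    positivity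
  · have key : ∀ N', M ≤ N' → ∑ m ∈ Finset.Ioc M N', (m:ℝ)^(-(t+1))
        ≤ ((M:ℝ)^(-t) - (N':ℝ)^(-t))/t := by
      intro N' hN'
      induction N' with
      | zero => omega
      | succ K ih =>
        rcases Nat.lt_or_ge M (K+1) with h2 | h2
        · have hMK : M ≤ K := by omega
          have hsum : ∑ m ∈ Finset.Ioc M (K+1), (m:ℝ)^(-(t+1))
              = ∑ m ∈ Finset.Ioc M K, (m:ℝ)^(-(t+1)) + ((K+1:ℕ):ℝ)^(-(t+1)) :=
            Finset.sum_Ioc_succ_top hMK _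
          rw [hsum]
          have hk := key2 (t := t) ht (x := (K:ℝ)+1) (by
            have : (1:ℝ) ≤ (K:ℝ) := by exact_mod_cast hMK.trans' hM
            linarith)
          have hc : ((K:ℝ)+1) - 1 = (K:ℝ) := by ring
          rw [hc] at hk
          have hterm : ((K+1:ℕ):ℝ)^(-(t+1)) ≤ ((K:ℝ)^(-t) - ((K:ℝ)+1)^(-t))/t := by
            rw [le_div_iff₀ ht0]
            push_cast
            nlinarith [hk]
          have hih := ih hMK
          have hcast : ((K+1:ℕ):ℝ) = (K:ℝ)+1 := by push_cast; ring
          rw [hcast]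
          calc _ ≤ ((M:ℝ)^(-t) - (K:ℝ)^(-t))/t + ((K:ℝ)^(-t) - ((K:ℝ)+1)^(-t))/t := by
                rw [hcast] at hterm
                linarith
          _ = ((M:ℝ)^(-t) - ((K:ℝ)+1)^(-t))/t := by ring
        · have : M = K + 1 := by omega
          subst this
          simp
    have := key N (le_of_lt h)
    refine this.trans ?_
    have h9 : (0:ℝ) ≤ (N:ℝ)^(-t) := Real.rpow_nonneg (Nat.cast_nonneg _) _
    gcongr
    linarith
lemma supn_pos {α : Fin 3 → ℤ} (hα : α ≠ 0) : 1 ≤ supn α := by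
  by_contra h
  push_neg at h
  apply hα
  funext i
  simp only [Pi.zero_apply]
  have := supn_le_iff.1 (by omega : supn α ≤ 0) i
  omega

lemma supn_zero : supn 0 = 0 := by simp [supn]

lemma znorm_rpow_le_supn_rpow {s : ℝ} (hs : 0 < s) (α : Fin 3 → ℤ) :
    znorm α ^ (-s) ≤ ((supn α : ℝ)) ^ (-s) := by
  rcases eq_or_ne α 0 with rfl | hα
  · rw [znorm_zero, supn_zero]
    norm_num
  · apply Real.rpow_le_rpow_of_nonpos _ (supn_le_znorm α) (by linarith)
    have := supn_pos hα
    exact_mod_cast Nat.lt_of_lt_of_le Nat.zero_lt_one this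

lemma ball_lattice {s : ℝ} (hs1 : 1 ≤ s) (hs3 : s < 3) :
    ∃ C : ℝ, 0 < C ∧ ∀ R : ℝ, 1 ≤ R → ∀ F : Finset (Fin 3 → ℤ),
      (∀ α ∈ F, znorm α ≤ R) → ∑ α ∈ F, znorm α ^ (-s) ≤ C * R ^ (3 - s) := by
  have h3s : 0 < 3 - s := by linarith
  refine ⟨27 * (1/(3-s) + 1), by positivity, ?_⟩
  intro R hR F hF
  have hR0 : (0:ℝ) ≤ R := by linarith
  set M := ⌊R⌋₊ with hM_def
  have hs0 : 0 < s := by linarith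
  set w : ℕ → ℝ := fun m => (m:ℝ)^(-s) with hw_def
  have hw : ∀ m, 0 ≤ w m := fun m => Real.rpow_nonneg (Nat.cast_nonneg _) _
  have step1 : ∑ α ∈ F, znorm α ^ (-s) ≤ ∑ α ∈ F, w (supn α) :=
    Finset.sum_le_sum fun α _ => znorm_rpow_le_supn_rpow hs0 α
  have hmem : ∀ α ∈ F, supn α ∈ Finset.Icc 0 M := by
    intro α hα
    simp only [Finset.mem_Icc]
    refine ⟨Nat.zero_le _, Nat.le_floor ?_⟩
    exact (supn_le_znorm α).trans (hF α hα)
  have step2 := sum_shell F w hw (Finset.Icc 0 M) hmem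
  have step3 : ∑ m ∈ Finset.Icc 0 M, ((26 * m^2 + 1 : ℕ) : ℝ) * w m
      = ∑ m ∈ Finset.Icc 1 M, ((26 * m^2 + 1 : ℕ) : ℝ) * w m := by
    symm
    apply Finset.sum_subset
    · intro m hm
      simp only [Finset.mem_Icc] at hm ⊢
      omega
    · intro m hm hnm
      simp only [Finset.mem_Icc] at hm hnm
      have : m = 0 := by omega
      subst this
      have : w 0 = 0 := by
        simp only [hw_def, Nat.cast_zero]
        rw [Real.zero_rpow (by linarith)]
      rw [this, mul_zero]
  have step4 : ∑ m ∈ Finset.Icc 1 M, ((26 * m^2 + 1 : ℕ) : ℝ) * w m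
      ≤ ∑ m ∈ Finset.Icc 1 M, 27 * (m:ℝ)^(2-s) := by
    apply Finset.sum_le_sum
    intro m hm
    simp only [Finset.mem_Icc] at hm
    have hm1 : (1:ℝ) ≤ (m:ℝ) := by exact_mod_cast hm.1
    have hm0 : (0:ℝ) < (m:ℝ) := by linarith
    have hc : ((26 * m^2 + 1 : ℕ) : ℝ) ≤ 27 * (m:ℝ)^(2:ℝ) := by
      push_cast
      rw [Real.rpow_two]
      nlinarith
    have he : (m:ℝ)^(2:ℝ) * (m:ℝ)^(-s) = (m:ℝ)^(2-s) := by
      rw [← Real.rpow_add hm0]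
      ring_nf
    calc ((26 * m^2 + 1 : ℕ) : ℝ) * w m ≤ 27 * (m:ℝ)^(2:ℝ) * w m :=
          mul_le_mul_of_nonneg_right hc (hw m)
    _ = 27 * ((m:ℝ)^(2:ℝ) * (m:ℝ)^(-s)) := by rw [hw_def]; ring
    _ = 27 * (m:ℝ)^(2-s) := by rw [he]
  have step5 : ∑ m ∈ Finset.Icc 1 M, (m:ℝ)^(2-s) ≤ (1/(3-s) + 1) * (M:ℝ)^(3-s) := by
    have := ball_sum_1d (p := 2-s) (by linarith) (by linarith) M
    convert this using 2 <;> ring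
  have step6 : (M:ℝ)^(3-s) ≤ R^(3-s) :=
    Real.rpow_le_rpow (Nat.cast_nonneg _) (Nat.floor_le hR0) (by linarith)
  calc ∑ α ∈ F, znorm α ^ (-s) ≤ ∑ m ∈ Finset.Icc 1 M, 27 * (m:ℝ)^(2-s) := by
        rw [step3] at step2
        linarith [step1, step2, step4]
  _ = 27 * ∑ m ∈ Finset.Icc 1 M, (m:ℝ)^(2-s) := by rw [Finset.mul_sum]
  _ ≤ 27 * ((1/(3-s) + 1) * (M:ℝ)^(3-s)) := by
        apply mul_le_mul_of_nonneg_left step5 (by norm_num)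
  _ ≤ 27 * ((1/(3-s) + 1) * R^(3-s)) := by
        apply mul_le_mul_of_nonneg_left _ (by norm_num)
        apply mul_le_mul_of_nonneg_left step6 (by positivity)
  _ = 27 * (1/(3-s) + 1) * R^(3-s) := by ring

lemma tail_lattice {s : ℝ} (hs : 4 ≤ s) :
    ∃ C : ℝ, 0 < C ∧ ∀ R : ℝ, 2 ≤ R → ∀ F : Finset (Fin 3 → ℤ),
      (∀ α ∈ F, R < znorm α) → ∑ α ∈ F, znorm α ^ (-s) ≤ C * R ^ (3 - s) := by
  set t := s - 3 with ht_def
  have ht : 1 ≤ t := by simp only [ht_def]; linarith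
  have ht0 : 0 < t := by linarith
  have hsq3 : (0:ℝ) < Real.sqrt 3 := Real.sqrt_pos.2 (by norm_num)
  have hsq3' : Real.sqrt 3 ≤ 2 := by
    rw [show (2:ℝ) = Real.sqrt 4 by
      rw [show (4:ℝ) = 2^2 by norm_num, Real.sqrt_sq (by norm_num)]]
    exact Real.sqrt_le_sqrt (by norm_num)
  refine ⟨27 * (2 * Real.sqrt 3)^t / t, by positivity, ?_⟩
  intro R hR F hF
  have hR0 : (0:ℝ) < R := by linarith
  set M := ⌊R / Real.sqrt 3⌋₊ with hM_def
  have h1R : 1 ≤ R / Real.sqrt 3 := by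
    rw [le_div_iff₀ hsq3]
    linarith
  have hM1 : 1 ≤ M := Nat.le_floor (by exact_mod_cast h1R)
  have hMle : (M:ℝ) ≤ R / Real.sqrt 3 := Nat.floor_le (by positivity)
  have hs0 : 0 < s := by linarith
  set w : ℕ → ℝ := fun m => (m:ℝ)^(-s) with hw_def
  have hw : ∀ m, 0 ≤ w m := fun m => Real.rpow_nonneg (Nat.cast_nonneg _) _
  have step1 : ∑ α ∈ F, znorm α ^ (-s) ≤ ∑ α ∈ F, w (supn α) :=
    Finset.sum_le_sum fun α _ => znorm_rpow_le_supn_rpow hs0 α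
  set N := F.sup supn with hN_def
  have hmem : ∀ α ∈ F, supn α ∈ Finset.Ioc M N := by
    intro α hα
    simp only [Finset.mem_Ioc]
    constructor
    · have h2 : znorm α ≤ Real.sqrt 3 * (supn α : ℝ) := znorm_le_supn α
      have h3 : R < Real.sqrt 3 * (supn α : ℝ) := lt_of_lt_of_le (hF α hα) h2
      have h4 : R / Real.sqrt 3 < (supn α : ℝ) := by
        rw [div_lt_iff₀ hsq3]
        linarith [h3]
      have : (M:ℝ) < (supn α : ℝ) := lt_of_le_of_lt hMle h4
      exact_mod_cast this
    · exact Finset.le_sup hα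
  have step2 := sum_shell F w hw (Finset.Ioc M N) hmem
  have step4 : ∑ m ∈ Finset.Ioc M N, ((26 * m^2 + 1 : ℕ) : ℝ) * w m
      ≤ ∑ m ∈ Finset.Ioc M N, 27 * (m:ℝ)^(-(t+1)) := by
    apply Finset.sum_le_sum
    intro m hm
    simp only [Finset.mem_Ioc] at hm
    have hm1 : (1:ℝ) ≤ (m:ℝ) := by
      have : 1 ≤ m := by omega
      exact_mod_cast this
    have hm0 : (0:ℝ) < (m:ℝ) := by linarith
    have hc : ((26 * m^2 + 1 : ℕ) : ℝ) ≤ 27 * (m:ℝ)^(2:ℝ) := by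
      push_cast
      rw [Real.rpow_two]
      nlinarith
    have he : (m:ℝ)^(2:ℝ) * (m:ℝ)^(-s) = (m:ℝ)^(-(t+1)) := by
      rw [← Real.rpow_add hm0]
      congr 1
      simp only [ht_def]
      ring
    calc ((26 * m^2 + 1 : ℕ) : ℝ) * w m ≤ 27 * (m:ℝ)^(2:ℝ) * w m :=
          mul_le_mul_of_nonneg_right hc (hw m)
    _ = 27 * ((m:ℝ)^(2:ℝ) * (m:ℝ)^(-s)) := by rw [hw_def]; ring
    _ = 27 * (m:ℝ)^(-(t+1)) := by rw [he]
  have step5 : ∑ m ∈ Finset.Ioc M N, (m:ℝ)^(-(t+1)) ≤ (M:ℝ)^(-t)/t :=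
    tail_sum_1d ht M hM1 N
  -- M ≥ R/(2√3)
  have hMge : R / (2 * Real.sqrt 3) ≤ (M:ℝ) := by
    rcases lt_or_ge (R / Real.sqrt 3) 2 with h | h
    · have h1 : R / (2 * Real.sqrt 3) < 1 := by
        rw [div_lt_one (by positivity)]
        rw [div_lt_iff₀ hsq3] at h
        linarith
      have : (1:ℝ) ≤ (M:ℝ) := by exact_mod_cast hM1
      linarith
    · have h1 : (M:ℝ) > R / Real.sqrt 3 - 1 := by
        have := Nat.sub_one_lt_floor (R / Real.sqrt 3)
        linarith [this]
      have h2 : R / Real.sqrt 3 - 1 ≥ R / (2 * Real.sqrt 3) := by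
        have he : R / Real.sqrt 3 - R / (2 * Real.sqrt 3) = R / (2 * Real.sqrt 3) := by
          field_simp
          ring
        have h3 : 1 ≤ R / (2 * Real.sqrt 3) := by
          rw [le_div_iff₀ (by positivity)]
          rw [le_div_iff₀ hsq3] at h
          linarith
        linarith
      linarith
  have hMpos : (0:ℝ) < (M:ℝ) := by
    have : (1:ℝ) ≤ (M:ℝ) := by exact_mod_cast hM1
    linarith
  have step6 : (M:ℝ)^(-t) ≤ (2 * Real.sqrt 3)^t * R^(-t) := by
    have h1 : (M:ℝ)^(-t) ≤ (R / (2 * Real.sqrt 3))^(-t) :=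
      Real.rpow_le_rpow_of_nonpos (by positivity) hMge (by linarith)
    have h2 : (R / (2 * Real.sqrt 3))^(-t) = (2 * Real.sqrt 3)^t * R^(-t) := by
      rw [Real.rpow_neg (by positivity), Real.div_rpow (le_of_lt hR0) (by positivity),
        inv_div, Real.rpow_neg (le_of_lt hR0), div_eq_mul_inv]
    rw [h2] at h1
    exact h1
  have hfin : R^(-t) = R^(3-s) := by
    congr 1
    simp only [ht_def]
    ring
  calc ∑ α ∈ F, znorm α ^ (-s) ≤ ∑ m ∈ Finset.Ioc M N, 27 * (m:ℝ)^(-(t+1)) := by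
        linarith [step1, step2, step4]
  _ = 27 * ∑ m ∈ Finset.Ioc M N, (m:ℝ)^(-(t+1)) := by rw [Finset.mul_sum]
  _ ≤ 27 * ((M:ℝ)^(-t)/t) := mul_le_mul_of_nonneg_left step5 (by norm_num)
  _ ≤ 27 * (((2 * Real.sqrt 3)^t * R^(-t))/t) := by
        gcongr
  _ = 27 * (2 * Real.sqrt 3)^t / t * R^(3-s) := by
        rw [← hfin]
        ring
lemma div_rpow_neg {x c e : ℝ} (hx : 0 < x) (hc : 0 < c) :
    (x / c) ^ (-e) = c ^ e * x ^ (-e) := by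
  rw [Real.rpow_neg (by positivity), Real.div_rpow hx.le hc.le, inv_div,
    Real.rpow_neg hx.le, div_eq_mul_inv]

lemma rpow_helper {x : ℝ} (hx : 0 < x) {a b c : ℝ} (h : a + b = c) :
    x ^ a * x ^ b = x ^ c := by
  rw [← Real.rpow_add hx, h]

/-- For every `ρ ∈ (0,1)` there is `C > 0` (depending only on `ρ`) such that for every
`A > 0`, every `u : ℤ³ → ℂ` with `u 0 = 0` and `|u α| ≤ A/|α|^{2+ρ}` for `α ≠ 0`, and every
`k ≠ 0`, the nonlinear term satisfies
`∑_{0 < |α| ≤ 2|k|} |α||u α||u (k−α)| + |k|·∑_{|α| > 2|k|} |u α||u (k−α)| ≤ C·A²/|k|^{2ρ}`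
(the second sum converging). -/
theorem bootstrap_decay_improvement
    (ρ : ℝ) (hρ0 : 0 < ρ) (hρ1 : ρ < 1) :
    ∃ C : ℝ, 0 < C ∧
      ∀ (A : ℝ), 0 < A →
        ∀ u : (Fin 3 → ℤ) → ℂ, u 0 = 0 →
          (∀ α : Fin 3 → ℤ, α ≠ 0 → ‖u α‖ ≤ A / znorm α ^ ((2 : ℝ) + ρ)) →
          ∀ k : Fin 3 → ℤ, k ≠ 0 →
            Summable (fun α : {a : Fin 3 → ℤ // 2 * znorm k < znorm a} =>
              ‖u α.1‖ * ‖u (k - α.1)‖) ∧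
            (∑' α : {a : Fin 3 → ℤ // 0 < znorm a ∧ znorm a ≤ 2 * znorm k},
                znorm α.1 * ‖u α.1‖ * ‖u (k - α.1)‖)
              + znorm k * (∑' α : {a : Fin 3 → ℤ // 2 * znorm k < znorm a},
                ‖u α.1‖ * ‖u (k - α.1)‖)
              ≤ C * A ^ 2 / znorm k ^ (2 * ρ) := by
  obtain ⟨C₁, hC₁, hB₁⟩ := ball_lattice (s := 1 + ρ) (by linarith) (by linarith)
  obtain ⟨C₂, hC₂, hB₂⟩ := ball_lattice (s := 2 + ρ) (by linarith) (by linarith)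
  obtain ⟨C₃, hC₃, hB₃⟩ := tail_lattice (s := 4 + 2 * ρ) (by linarith)
  refine ⟨C₁ * (2 ^ ((2:ℝ) + ρ) * 2 ^ (3 - (1 + ρ)))
      + C₂ * (2 ^ ((1:ℝ) + ρ) * 3 ^ (3 - (2 + ρ)))
      + C₃ * 2 ^ ((2:ℝ) + ρ) * 2 ^ (3 - (4 + 2 * ρ)), by positivity, ?_⟩
  intro A hA u hu0 hu k hk
  set K := znorm k with hK_def
  have hK1 : 1 ≤ K := one_le_znorm hk
  have hK0 : 0 < K := by linarith
  have hU : ∀ α : Fin 3 → ℤ, α ≠ 0 → ‖u α‖ ≤ A * znorm α ^ (-((2:ℝ) + ρ)) := by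
    intro α hα
    rw [Real.rpow_neg (znorm_nonneg _), ← div_eq_mul_inv]
    exact hu α hα
  -- === second region ===
  have bound2 : ∀ α : Fin 3 → ℤ, 2 * K < znorm α →
      ‖u α‖ * ‖u (k - α)‖ ≤ A ^ 2 * 2 ^ ((2:ℝ) + ρ) * znorm α ^ (-((4:ℝ) + 2 * ρ)) := by
    intro α hα
    have hzα : 0 < znorm α := by linarith
    have hα0 : α ≠ 0 := znorm_pos_iff.1 hzα
    have hlow : znorm α / 2 ≤ znorm (k - α) := by
      have h1 : znorm α - znorm k ≤ znorm (α - k) := znorm_sub_znorm_le α k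
      rw [znorm_sub_comm] at h1
      linarith
    have hkα : k - α ≠ 0 := by
      rw [← znorm_pos_iff]
      linarith
    have h2 : ‖u (k - α)‖ ≤ A * (znorm α / 2) ^ (-((2:ℝ) + ρ)) := by
      refine (hU _ hkα).trans ?_
      apply mul_le_mul_of_nonneg_left _ hA.le
      exact Real.rpow_le_rpow_of_nonpos (by positivity) hlow (by linarith)
    have h3 : (znorm α / 2) ^ (-((2:ℝ) + ρ)) = 2 ^ ((2:ℝ) + ρ) * znorm α ^ (-((2:ℝ) + ρ)) :=
      div_rpow_neg hzα (by norm_num)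
    calc ‖u α‖ * ‖u (k - α)‖
        ≤ (A * znorm α ^ (-((2:ℝ) + ρ))) * (A * (znorm α / 2) ^ (-((2:ℝ) + ρ))) :=
          mul_le_mul (hU _ hα0) h2 (norm_nonneg _) (by positivity)
    _ = A ^ 2 * 2 ^ ((2:ℝ) + ρ) *
          (znorm α ^ (-((2:ℝ) + ρ)) * znorm α ^ (-((2:ℝ) + ρ))) := by rw [h3]; ring
    _ = A ^ 2 * 2 ^ ((2:ℝ) + ρ) * znorm α ^ (-((4:ℝ) + 2 * ρ)) := by
          rw [rpow_helper hzα (show -((2:ℝ) + ρ) + -((2:ℝ) + ρ) = -((4:ℝ) + 2 * ρ) by ring)]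
  have hsum2 : ∀ F' : Finset {a : Fin 3 → ℤ // 2 * K < znorm a},
      ∑ x ∈ F', ‖u x.1‖ * ‖u (k - x.1)‖
        ≤ A ^ 2 * 2 ^ ((2:ℝ) + ρ) * (C₃ * (2 * K) ^ ((3:ℝ) - (4 + 2 * ρ))) := by
    intro F'
    set F := F'.image Subtype.val with hF_def
    have h1 : ∑ x ∈ F', ‖u x.1‖ * ‖u (k - x.1)‖
        = ∑ α ∈ F, ‖u α‖ * ‖u (k - α)‖ := by
      rw [hF_def]
      rw [Finset.sum_image (fun x _ y _ h => Subtype.ext h)]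
    rw [h1]
    have h2 : ∑ α ∈ F, ‖u α‖ * ‖u (k - α)‖
        ≤ ∑ α ∈ F, A ^ 2 * 2 ^ ((2:ℝ) + ρ) * znorm α ^ (-((4:ℝ) + 2 * ρ)) := by
      apply Finset.sum_le_sum
      intro α hα
      apply bound2
      rw [hF_def, Finset.mem_image] at hα
      obtain ⟨x, _, rfl⟩ := hα
      exact x.2
    refine h2.trans ?_
    rw [← Finset.mul_sum]
    apply mul_le_mul_of_nonneg_left _ (by positivity)
    have h3 : ∑ α ∈ F, znorm α ^ (-((4:ℝ) + 2 * ρ)) ≤ C₃ * (2 * K) ^ (3 - (4 + 2 * ρ)) := by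
      apply hB₃ (2 * K) (by linarith)
      intro α hα
      rw [hF_def, Finset.mem_image] at hα
      obtain ⟨x, _, rfl⟩ := hα
      exact x.2
    exact h3
  have hnn2 : ∀ x : {a : Fin 3 → ℤ // 2 * K < znorm a},
      0 ≤ ‖u x.1‖ * ‖u (k - x.1)‖ := fun x => by positivity
  have hsummable2 : Summable (fun α : {a : Fin 3 → ℤ // 2 * K < znorm a} =>
      ‖u α.1‖ * ‖u (k - α.1)‖) :=
    summable_of_sum_le hnn2 hsum2
  have htsum2 : (∑' α : {a : Fin 3 → ℤ // 2 * K < znorm a}, ‖u α.1‖ * ‖u (k - α.1)‖)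
      ≤ A ^ 2 * 2 ^ ((2:ℝ) + ρ) * (C₃ * (2 * K) ^ ((3:ℝ) - (4 + 2 * ρ))) :=
    Summable.tsum_le_of_sum_le hsummable2 hsum2
  -- === first region ===
  set B₁ : ℝ := A ^ 2 * ((K / 2) ^ (-((2:ℝ) + ρ)) * (C₁ * (2 * K) ^ ((3:ℝ) - (1 + ρ))))
      + A ^ 2 * ((K / 2) ^ (-((1:ℝ) + ρ)) * (C₂ * (3 * K) ^ ((3:ℝ) - (2 + ρ)))) with hB₁_def
  have bound1 : ∀ α : Fin 3 → ℤ, 0 < znorm α → znorm α ≤ 2 * K →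
      znorm α * ‖u α‖ * ‖u (k - α)‖
        ≤ A ^ 2 * (znorm α ^ (-((1:ℝ) + ρ)) * znorm (k - α) ^ (-((2:ℝ) + ρ))) := by
    intro α hzα hα2K
    have hα0 : α ≠ 0 := znorm_pos_iff.1 hzα
    rcases eq_or_ne α k with hαk | hαk
    · have hz : k - α = 0 := by rw [hαk]; simp
      rw [hz, hu0]
      have hrhs : (0:ℝ) ≤ A ^ 2 * (znorm α ^ (-((1:ℝ) + ρ)) * znorm 0 ^ (-((2:ℝ) + ρ))) := by
        apply mul_nonneg (by positivity)
        exact mul_nonneg (Real.rpow_nonneg (znorm_nonneg _) _) (Real.rpow_nonneg (znorm_nonneg _) _)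
      simpa using hrhs
    · have hkα : k - α ≠ 0 := sub_ne_zero.2 (Ne.symm hαk)
      have hzkα : 0 < znorm (k - α) := znorm_pos hkα
      calc znorm α * ‖u α‖ * ‖u (k - α)‖
          ≤ znorm α * (A * znorm α ^ (-((2:ℝ) + ρ))) * (A * znorm (k - α) ^ (-((2:ℝ) + ρ))) := by
            apply mul_le_mul _ (hU _ hkα) (norm_nonneg _) (by positivity)
            exact mul_le_mul_of_nonneg_left (hU _ hα0) hzα.le
      _ = A ^ 2 * ((znorm α ^ ((1:ℝ)) * znorm α ^ (-((2:ℝ) + ρ))) * znorm (k - α) ^ (-((2:ℝ) + ρ))) := by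
            rw [Real.rpow_one]
            ring
      _ = A ^ 2 * (znorm α ^ (-((1:ℝ) + ρ)) * znorm (k - α) ^ (-((2:ℝ) + ρ))) := by
            rw [rpow_helper hzα (show (1:ℝ) + -((2:ℝ) + ρ) = -((1:ℝ) + ρ) by ring)]
  have hsum1 : ∀ F' : Finset {a : Fin 3 → ℤ // 0 < znorm a ∧ znorm a ≤ 2 * K},
      ∑ x ∈ F', znorm x.1 * ‖u x.1‖ * ‖u (k - x.1)‖ ≤ B₁ := by
    intro F'
    set F := F'.image Subtype.val with hF_def
    have hFprop : ∀ α ∈ F, 0 < znorm α ∧ znorm α ≤ 2 * K := by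
      intro α hα
      rw [hF_def, Finset.mem_image] at hα
      obtain ⟨x, _, rfl⟩ := hα
      exact x.2
    have h1 : ∑ x ∈ F', znorm x.1 * ‖u x.1‖ * ‖u (k - x.1)‖
        = ∑ α ∈ F, znorm α * ‖u α‖ * ‖u (k - α)‖ := by
      rw [hF_def, Finset.sum_image (fun x _ y _ h => Subtype.ext h)]
    rw [h1]
    have h2 : ∑ α ∈ F, znorm α * ‖u α‖ * ‖u (k - α)‖
        ≤ ∑ α ∈ F, A ^ 2 * (znorm α ^ (-((1:ℝ) + ρ)) * znorm (k - α) ^ (-((2:ℝ) + ρ))) :=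
      Finset.sum_le_sum fun α hα => bound1 α (hFprop α hα).1 (hFprop α hα).2
    refine h2.trans ?_
    rw [← Finset.sum_filter_add_sum_filter_not F (fun α => 2 * znorm α ≤ K)]
    set Fa := F.filter (fun α => 2 * znorm α ≤ K) with hFa_def
    set Fb := F.filter (fun α => ¬(2 * znorm α ≤ K)) with hFb_def
    have hSa : ∑ α ∈ Fa, A ^ 2 * (znorm α ^ (-((1:ℝ) + ρ)) * znorm (k - α) ^ (-((2:ℝ) + ρ)))
        ≤ A ^ 2 * ((K / 2) ^ (-((2:ℝ) + ρ)) * (C₁ * (2 * K) ^ ((3:ℝ) - (1 + ρ)))) := by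
      have hterm : ∀ α ∈ Fa, A ^ 2 * (znorm α ^ (-((1:ℝ) + ρ)) * znorm (k - α) ^ (-((2:ℝ) + ρ)))
          ≤ A ^ 2 * (K / 2) ^ (-((2:ℝ) + ρ)) * znorm α ^ (-((1:ℝ) + ρ)) := by
        intro α hα
        rw [hFa_def, Finset.mem_filter] at hα
        have hlow : K / 2 ≤ znorm (k - α) := by
          have h1 : znorm k - znorm α ≤ znorm (k - α) := znorm_sub_znorm_le k α
          have := hα.2
          linarith
        have h3 : znorm (k - α) ^ (-((2:ℝ) + ρ)) ≤ (K / 2) ^ (-((2:ℝ) + ρ)) :=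
          Real.rpow_le_rpow_of_nonpos (by positivity) hlow (by linarith)
        calc A ^ 2 * (znorm α ^ (-((1:ℝ) + ρ)) * znorm (k - α) ^ (-((2:ℝ) + ρ)))
            ≤ A ^ 2 * (znorm α ^ (-((1:ℝ) + ρ)) * (K / 2) ^ (-((2:ℝ) + ρ))) := by
              apply mul_le_mul_of_nonneg_left _ (by positivity)
              exact mul_le_mul_of_nonneg_left h3 (Real.rpow_nonneg (znorm_nonneg _) _)
        _ = A ^ 2 * (K / 2) ^ (-((2:ℝ) + ρ)) * znorm α ^ (-((1:ℝ) + ρ)) := by ring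
      calc ∑ α ∈ Fa, A ^ 2 * (znorm α ^ (-((1:ℝ) + ρ)) * znorm (k - α) ^ (-((2:ℝ) + ρ)))
          ≤ ∑ α ∈ Fa, A ^ 2 * (K / 2) ^ (-((2:ℝ) + ρ)) * znorm α ^ (-((1:ℝ) + ρ)) :=
            Finset.sum_le_sum hterm
      _ = A ^ 2 * (K / 2) ^ (-((2:ℝ) + ρ)) * ∑ α ∈ Fa, znorm α ^ (-((1:ℝ) + ρ)) := by
            rw [← Finset.mul_sum]
      _ ≤ A ^ 2 * (K / 2) ^ (-((2:ℝ) + ρ)) * (C₁ * (2 * K) ^ ((3:ℝ) - (1 + ρ))) := by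
            apply mul_le_mul_of_nonneg_left _
              (mul_nonneg (by positivity) (Real.rpow_nonneg (by linarith) _))
            apply hB₁ (2 * K) (by linarith)
            intro α hα
            rw [hFa_def, Finset.mem_filter] at hα
            exact (hFprop α hα.1).2
      _ = A ^ 2 * ((K / 2) ^ (-((2:ℝ) + ρ)) * (C₁ * (2 * K) ^ ((3:ℝ) - (1 + ρ)))) := by ring
    have hSb : ∑ α ∈ Fb, A ^ 2 * (znorm α ^ (-((1:ℝ) + ρ)) * znorm (k - α) ^ (-((2:ℝ) + ρ)))
        ≤ A ^ 2 * ((K / 2) ^ (-((1:ℝ) + ρ)) * (C₂ * (3 * K) ^ ((3:ℝ) - (2 + ρ)))) := by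
      have hterm : ∀ α ∈ Fb, A ^ 2 * (znorm α ^ (-((1:ℝ) + ρ)) * znorm (k - α) ^ (-((2:ℝ) + ρ)))
          ≤ A ^ 2 * (K / 2) ^ (-((1:ℝ) + ρ)) * znorm (k - α) ^ (-((2:ℝ) + ρ)) := by
        intro α hα
        rw [hFb_def, Finset.mem_filter] at hα
        have hzα := (hFprop α hα.1).1
        have hlow : K / 2 ≤ znorm α := by
          have := hα.2
          push_neg at this
          linarith
        have h3 : znorm α ^ (-((1:ℝ) + ρ)) ≤ (K / 2) ^ (-((1:ℝ) + ρ)) :=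
          Real.rpow_le_rpow_of_nonpos (by positivity) hlow (by linarith)
        calc A ^ 2 * (znorm α ^ (-((1:ℝ) + ρ)) * znorm (k - α) ^ (-((2:ℝ) + ρ)))
            ≤ A ^ 2 * ((K / 2) ^ (-((1:ℝ) + ρ)) * znorm (k - α) ^ (-((2:ℝ) + ρ))) := by
              apply mul_le_mul_of_nonneg_left _ (by positivity)
              apply mul_le_mul_of_nonneg_right h3 (Real.rpow_nonneg (znorm_nonneg _) _)
        _ = A ^ 2 * (K / 2) ^ (-((1:ℝ) + ρ)) * znorm (k - α) ^ (-((2:ℝ) + ρ)) := by ring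
      have hreindex : ∑ α ∈ Fb, znorm (k - α) ^ (-((2:ℝ) + ρ))
          = ∑ β ∈ Fb.image (fun α => k - α), znorm β ^ (-((2:ℝ) + ρ)) := by
        rw [Finset.sum_image]
        intro x _ y _ h
        have := sub_right_injective h
        exact this
      calc ∑ α ∈ Fb, A ^ 2 * (znorm α ^ (-((1:ℝ) + ρ)) * znorm (k - α) ^ (-((2:ℝ) + ρ)))
          ≤ ∑ α ∈ Fb, A ^ 2 * (K / 2) ^ (-((1:ℝ) + ρ)) * znorm (k - α) ^ (-((2:ℝ) + ρ)) :=
            Finset.sum_le_sum hterm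
      _ = A ^ 2 * (K / 2) ^ (-((1:ℝ) + ρ)) * ∑ α ∈ Fb, znorm (k - α) ^ (-((2:ℝ) + ρ)) := by
            rw [← Finset.mul_sum]
      _ ≤ A ^ 2 * (K / 2) ^ (-((1:ℝ) + ρ)) * (C₂ * (3 * K) ^ ((3:ℝ) - (2 + ρ))) := by
            apply mul_le_mul_of_nonneg_left _
              (mul_nonneg (by positivity) (Real.rpow_nonneg (by linarith) _))
            rw [hreindex]
            apply hB₂ (3 * K) (by linarith)
            intro β hβ
            rw [Finset.mem_image] at hβ
            obtain ⟨α, hα, rfl⟩ := hβ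
            rw [hFb_def, Finset.mem_filter] at hα
            have h4 : znorm (k - α) ≤ znorm k + znorm α := znorm_sub_le k α
            have h5 := (hFprop α hα.1).2
            linarith
      _ = A ^ 2 * ((K / 2) ^ (-((1:ℝ) + ρ)) * (C₂ * (3 * K) ^ ((3:ℝ) - (2 + ρ)))) := by ring
    rw [hB₁_def]
    linarith [hSa, hSb]
  have hnn1 : ∀ x : {a : Fin 3 → ℤ // 0 < znorm a ∧ znorm a ≤ 2 * K},
      0 ≤ znorm x.1 * ‖u x.1‖ * ‖u (k - x.1)‖ := fun x => by
    have := x.2.1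
    positivity
  have hsummable1 : Summable (fun x : {a : Fin 3 → ℤ // 0 < znorm a ∧ znorm a ≤ 2 * K} =>
      znorm x.1 * ‖u x.1‖ * ‖u (k - x.1)‖) :=
    summable_of_sum_le hnn1 hsum1
  have htsum1 : (∑' x : {a : Fin 3 → ℤ // 0 < znorm a ∧ znorm a ≤ 2 * K},
      znorm x.1 * ‖u x.1‖ * ‖u (k - x.1)‖) ≤ B₁ :=
    Summable.tsum_le_of_sum_le hsummable1 hsum1
  refine ⟨hsummable2, ?_⟩
  -- === final algebra ===
  have hKρ : (0:ℝ) < K ^ (2 * ρ) := Real.rpow_pos_of_pos hK0 _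
  set E : ℝ := K ^ (-(2 * ρ)) with hE_def
  have e1 : (K / 2) ^ (-((2:ℝ) + ρ)) * (2 * K) ^ ((3:ℝ) - (1 + ρ))
      = 2 ^ ((2:ℝ) + ρ) * 2 ^ ((3:ℝ) - (1 + ρ)) * E := by
    rw [div_rpow_neg hK0 (by norm_num), Real.mul_rpow (by norm_num) hK0.le, hE_def]
    rw [show 2 ^ ((2:ℝ) + ρ) * K ^ (-((2:ℝ) + ρ)) * (2 ^ ((3:ℝ) - (1 + ρ)) * K ^ ((3:ℝ) - (1 + ρ)))
        = 2 ^ ((2:ℝ) + ρ) * 2 ^ ((3:ℝ) - (1 + ρ)) * (K ^ (-((2:ℝ) + ρ)) * K ^ ((3:ℝ) - (1 + ρ))) by ring]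
    rw [rpow_helper hK0 (by ring : -((2:ℝ) + ρ) + ((3:ℝ) - (1 + ρ)) = -(2 * ρ))]
  have e2 : (K / 2) ^ (-((1:ℝ) + ρ)) * (3 * K) ^ ((3:ℝ) - (2 + ρ))
      = 2 ^ ((1:ℝ) + ρ) * 3 ^ ((3:ℝ) - (2 + ρ)) * E := by
    rw [div_rpow_neg hK0 (by norm_num), Real.mul_rpow (by norm_num) hK0.le, hE_def]
    rw [show 2 ^ ((1:ℝ) + ρ) * K ^ (-((1:ℝ) + ρ)) * (3 ^ ((3:ℝ) - (2 + ρ)) * K ^ ((3:ℝ) - (2 + ρ)))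
        = 2 ^ ((1:ℝ) + ρ) * 3 ^ ((3:ℝ) - (2 + ρ)) * (K ^ (-((1:ℝ) + ρ)) * K ^ ((3:ℝ) - (2 + ρ))) by ring]
    rw [rpow_helper hK0 (by ring : -((1:ℝ) + ρ) + ((3:ℝ) - (2 + ρ)) = -(2 * ρ))]
  have e3 : K * (2 * K) ^ ((3:ℝ) - (4 + 2 * ρ)) = 2 ^ ((3:ℝ) - (4 + 2 * ρ)) * E := by
    rw [Real.mul_rpow (by norm_num) hK0.le, hE_def]
    rw [show K * (2 ^ ((3:ℝ) - (4 + 2 * ρ)) * K ^ ((3:ℝ) - (4 + 2 * ρ)))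
        = 2 ^ ((3:ℝ) - (4 + 2 * ρ)) * (K ^ (1:ℝ) * K ^ ((3:ℝ) - (4 + 2 * ρ))) by
          rw [Real.rpow_one]; ring]
    rw [rpow_helper hK0 (by ring : (1:ℝ) + ((3:ℝ) - (4 + 2 * ρ)) = -(2 * ρ))]
  have hEeq : E = (K ^ (2 * ρ))⁻¹ := by
    rw [hE_def, Real.rpow_neg hK0.le]
  calc (∑' x : {a : Fin 3 → ℤ // 0 < znorm a ∧ znorm a ≤ 2 * K},
          znorm x.1 * ‖u x.1‖ * ‖u (k - x.1)‖)
        + K * (∑' α : {a : Fin 3 → ℤ // 2 * K < znorm a}, ‖u α.1‖ * ‖u (k - α.1)‖)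
      ≤ B₁ + K * (A ^ 2 * 2 ^ ((2:ℝ) + ρ) * (C₃ * (2 * K) ^ ((3:ℝ) - (4 + 2 * ρ)))) := by
        have h7 : K * (∑' α : {a : Fin 3 → ℤ // 2 * K < znorm a}, ‖u α.1‖ * ‖u (k - α.1)‖)
            ≤ K * (A ^ 2 * 2 ^ ((2:ℝ) + ρ) * (C₃ * (2 * K) ^ ((3:ℝ) - (4 + 2 * ρ)))) :=
          mul_le_mul_of_nonneg_left htsum2 hK0.le
        linarith [htsum1, h7]
  _ = (C₁ * (2 ^ ((2:ℝ) + ρ) * 2 ^ (3 - (1 + ρ)))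
      + C₂ * (2 ^ ((1:ℝ) + ρ) * 3 ^ (3 - (2 + ρ)))
      + C₃ * 2 ^ ((2:ℝ) + ρ) * 2 ^ (3 - (4 + 2 * ρ))) * A ^ 2 * E := by
        rw [hB₁_def]
        linear_combination (A ^ 2 * C₁) * e1 + (A ^ 2 * C₂) * e2
          + (A ^ 2 * 2 ^ ((2:ℝ) + ρ) * C₃) * e3
  _ = (C₁ * (2 ^ ((2:ℝ) + ρ) * 2 ^ (3 - (1 + ρ)))
      + C₂ * (2 ^ ((1:ℝ) + ρ) * 3 ^ (3 - (2 + ρ)))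
      + C₃ * 2 ^ ((2:ℝ) + ρ) * 2 ^ (3 - (4 + 2 * ρ))) * A ^ 2 / K ^ (2 * ρ) := by
        rw [hEeq]
        rw [div_eq_mul_inv]
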